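/- arXiv:2505.01308 — 2 statements merged into one kernel-verified Lean document; each statement's English description precedes it below -/
import Mathlib

section
/- Suppose L̂ : ℝ → ℝ^{4×4} evolves by the natural adaptation law L̂' = (1/γ) L̂ S L̂ with γ > 0 and S(t) symmetric, and L is constant symmetric. Then d/dt D_F(L‖L̂) = (1/γ) tr(S (L̂ − L)). -/
open Matrix

attribute [local instance] Matrix.normedAddCommGroup Matrix.normedSpace

set_option maxHeartbeats 1000000 in
/-- The determinant as a continuous multilinear map in the rows. -/
noncomputable def detCM : ContinuousMultilinearMap ℝ (fun _ : Fin 4 => (Fin 4 → ℝ)) ℝ :=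
  { Matrix.detRowAlternating.toMultilinearMap with
    cont := by
      show Continuous fun m : Matrix (Fin 4) (Fin 4) ℝ => m.det
      exact continuous_id.matrix_det }

lemma detCM_apply (m : Matrix (Fin 4) (Fin 4) ℝ) : detCM m = m.det := rfl

set_option maxHeartbeats 1000000 in
lemma det_hasDerivAt_aux (Lhat : ℝ → Matrix (Fin 4) (Fin 4) ℝ) (t : ℝ)
    (M' : Matrix (Fin 4) (Fin 4) ℝ) (h : HasDerivAt Lhat M' t) :
    HasDerivAt (fun s => (Lhat s).det) (∑ i, ((Lhat t).updateRow i (M' i)).det) t := by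
  have h2 : HasDerivAt (fun s => detCM (Lhat s)) (detCM.linearDeriv (Lhat t) M') t :=
    (detCM.hasFDerivAt (Lhat t)).comp_hasDerivAt t h
  simp only [detCM_apply] at h2
  erw [ContinuousMultilinearMap.linearDeriv_apply] at h2
  convert h2 using 2 with i
  rfl

lemma det_updateRow_expand (A : Matrix (Fin 4) (Fin 4) ℝ) (i : Fin 4) (v : Fin 4 → ℝ) :
    (A.updateRow i v).det = ∑ j, v j * (A.updateRow i (Pi.single j (1:ℝ))).det := by
  have key : ∀ s : Finset (Fin 4),
      (A.updateRow i (∑ j ∈ s, v j • (Pi.single j (1:ℝ) : Fin 4 → ℝ))).det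
        = ∑ j ∈ s, v j * (A.updateRow i (Pi.single j (1:ℝ))).det := by
    intro s
    induction s using Finset.induction with
    | empty =>
        simp only [Finset.sum_empty]
        exact Matrix.det_eq_zero_of_row_eq_zero i (by simp)
    | insert _ _ hk ih =>
        rw [Finset.sum_insert hk, Matrix.det_updateRow_add, Matrix.det_updateRow_smul,
          Finset.sum_insert hk, ih]
  have hv : v = ∑ j, v j • (Pi.single j (1:ℝ) : Fin 4 → ℝ) := by
    ext k
    simp [Pi.single_apply]
  conv_lhs => rw [hv]
  exact key Finset.univ

lemma sum_det_updateRow (A B : Matrix (Fin 4) (Fin 4) ℝ) :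
    (∑ i, (A.updateRow i (B i)).det) = (B * adjugate A).trace := by
  rw [Matrix.trace]
  refine Finset.sum_congr rfl fun i _ => ?_
  rw [det_updateRow_expand]
  simp [Matrix.mul_apply, Matrix.adjugate_apply, Matrix.diag]

lemma inv_hasDerivAt (Lhat : ℝ → Matrix (Fin 4) (Fin 4) ℝ) (t : ℝ)
    (M' : Matrix (Fin 4) (Fin 4) ℝ) (h : HasDerivAt Lhat M' t)
    (hinv : ∀ s, IsUnit (Lhat s).det) :
    HasDerivAt (fun s => (Lhat s)⁻¹) (-((Lhat t)⁻¹ * M' * (Lhat t)⁻¹)) t := by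
  have hcontL : ContinuousAt Lhat t := h.continuousAt
  have hcontinv : ContinuousAt (fun s => (Lhat s)⁻¹) t := by
    refine (continuousAt_matrix_inv (Lhat t) ?_).comp hcontL
    rw [show (Ring.inverse : ℝ → ℝ) = Inv.inv from funext fun x => Ring.inverse_eq_inv x]
    exact continuousAt_inv₀ (hinv t).ne_zero
  erw [hasDerivAt_iff_tendsto_slope] at h ⊢
  have heq : slope (fun s => (Lhat s)⁻¹) t
      = fun s => -((Lhat s)⁻¹ * slope Lhat t s * (Lhat t)⁻¹) := by
    funext s
    have key : (Lhat s)⁻¹ - (Lhat t)⁻¹ = (Lhat s)⁻¹ * (Lhat t - Lhat s) * (Lhat t)⁻¹ := by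
      rw [Matrix.mul_sub, Matrix.nonsing_inv_mul _ (hinv s), Matrix.sub_mul, Matrix.one_mul,
        mul_assoc, Matrix.mul_nonsing_inv _ (hinv t), Matrix.mul_one]
    rw [slope_def_module, slope_def_module, key, ← neg_sub (Lhat s) (Lhat t)]
    simp only [mul_neg, neg_mul, smul_neg, mul_smul_comm, smul_mul_assoc]
  rw [heq]
  exact (((hcontinv.tendsto.mono_left nhdsWithin_le_nhds).mul h).mul tendsto_const_nhds).neg

/-- Under the natural adaptation law `L̂' = (1/γ) L̂ S L̂`, the Bregman
log-det divergence satisfies `d/dt D_F(L‖L̂) = (1/γ) tr(S (L̂ − L))`. -/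
theorem bregman_logdet_deriv_NAL
    (γ : ℝ) (hγ : 0 < γ)
    (L : Matrix (Fin 4) (Fin 4) ℝ) (hL : IsUnit L.det) (hLsymm : L.IsSymm)
    (Lhat : ℝ → Matrix (Fin 4) (Fin 4) ℝ)
    (S : ℝ → Matrix (Fin 4) (Fin 4) ℝ) (hS : ∀ t, (S t).IsSymm)
    (hderiv : ∀ t, HasDerivAt Lhat ((1 / γ) • (Lhat t * S t * Lhat t)) t)
    (hinv : ∀ t, IsUnit (Lhat t).det) :
    ∀ t, HasDerivAt
      (fun s => Real.log ((Lhat s).det / L.det) + ((Lhat s)⁻¹ * L).trace - 4)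
      ((1 / γ) * (S t * (Lhat t - L)).trace) t := by
  intro t
  set A := Lhat t with hA
  set M' := (1 / γ) • (A * S t * A) with hM'
  have hdA : A.det ≠ 0 := (hinv t).ne_zero
  have hdL : L.det ≠ 0 := hL.ne_zero
  -- derivative of the determinant
  have hdet : HasDerivAt (fun s => (Lhat s).det) ((M' * adjugate A).trace) t := by
    have := det_hasDerivAt_aux Lhat t M' (hderiv t)
    rwa [sum_det_updateRow] at this
  -- derivative of log of determinant
  have hlog : HasDerivAt (fun s => Real.log ((Lhat s).det))
      ((M' * adjugate A).trace / A.det) t := hdet.log hdA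
  -- identify the log-derivative
  have hadj : adjugate A = A.det • A⁻¹ := by
    rw [Matrix.inv_def, smul_smul, Ring.inverse_eq_inv, mul_inv_cancel₀ hdA, one_smul]
  have hd1 : (M' * adjugate A).trace / A.det = (1 / γ) * (S t * A).trace := by
    rw [hadj, Matrix.mul_smul, Matrix.trace_smul, smul_eq_mul, mul_div_cancel_left₀ _ hdA,
      hM', Matrix.smul_mul, Matrix.trace_smul, smul_eq_mul,
      Matrix.mul_nonsing_inv_cancel_right _ _ (hinv t), Matrix.trace_mul_comm]
  -- derivative of the inverse
  have hinvd := inv_hasDerivAt Lhat t M' (hderiv t) hinv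
  have hsimp : A⁻¹ * M' * A⁻¹ = (1 / γ) • S t := by
    rw [hM', Matrix.mul_smul, Matrix.smul_mul]
    congr 1
    rw [mul_assoc A (S t) A, Matrix.nonsing_inv_mul_cancel_left _ _ (hinv t),
      Matrix.mul_nonsing_inv_cancel_right _ _ (hinv t)]
  rw [hsimp] at hinvd
  -- derivative of the trace term
  have htr : HasDerivAt (fun s => ((Lhat s)⁻¹ * L).trace)
      ((-((1 / γ) • S t) * L).trace) t := by
    have φ : Matrix (Fin 4) (Fin 4) ℝ →L[ℝ] ℝ :=
      LinearMap.toContinuousLinearMap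
        ((Matrix.traceLinearMap (Fin 4) ℝ ℝ).comp (LinearMap.mulRight ℝ L))
    exact (LinearMap.toContinuousLinearMap
        ((Matrix.traceLinearMap (Fin 4) ℝ ℝ).comp
          (LinearMap.mulRight ℝ L))).hasFDerivAt.comp_hasDerivAt t hinvd
  -- rewrite the function
  have hfun : (fun s => Real.log ((Lhat s).det / L.det) + ((Lhat s)⁻¹ * L).trace - 4)
      = fun s => (Real.log ((Lhat s).det) - Real.log L.det + ((Lhat s)⁻¹ * L).trace) - 4 := by
    funext s
    rw [Real.log_div (hinv s).ne_zero hdL]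
  rw [hfun]
  have total := (((hlog.sub_const (Real.log L.det)).add htr).sub_const 4)
  convert total using 1
  · rfl
  · rfl
  · rfl
  rw [hd1]
  rw [neg_mul, Matrix.trace_neg, Matrix.smul_mul, Matrix.trace_smul, smul_eq_mul,
    Matrix.mul_sub, Matrix.trace_sub]
  ring
end

section
/- Let υ = e_x' + ϑ_e e_x + ϑ_ψ ψ with ψ evolving by ψ' = Λψ + Γ_p e_x + Γ_v e_x' + Γ_f e_f and gains chosen per Γ_p = ϑ_ψ⁻¹(M_d⁻¹K_d + ϑ_ψΛϑ_ψ⁻¹ϑ_e), Γ_v = ϑ_ψ⁻¹(M_d⁻¹D_d − ϑ_e + ϑ_ψΛϑ_ψ⁻¹), Γ_f = ϑ_ψ⁻¹M_d⁻¹. If additionally the second-order impedance M_d e_x'' + D_d e_x' + K_d e_x = −e_f holds at all times, then υ' = ϑ_ψ Λ ϑ_ψ⁻¹ υ, i.e., the sliding surface obeys a linear homogeneous ODE. -/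
open Matrix

/-- With the pseudo-impedance dynamics, the chosen gains, and the
second-order impedance holding at all times, the sliding surface
`υ = e_x' + ϑe e_x + ϑψ ψ` obeys the linear homogeneous ODE `υ' = ϑψ Λ ϑψ⁻¹ υ`. -/
theorem sliding_surface_linear_ode
    (Md Dd Kd ϑψ ϑe Λ : Matrix (Fin 6) (Fin 6) ℝ)
    (hMd : IsUnit Md) (hϑψ : IsUnit ϑψ)
    (Γp Γv Γf : Matrix (Fin 6) (Fin 6) ℝ)
    (hΓp : Γp = ϑψ⁻¹ * (Md⁻¹ * Kd + ϑψ * Λ * ϑψ⁻¹ * ϑe))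
    (hΓv : Γv = ϑψ⁻¹ * (Md⁻¹ * Dd - ϑe + ϑψ * Λ * ϑψ⁻¹))
    (hΓf : Γf = ϑψ⁻¹ * Md⁻¹)
    (ex ex' ex'' ψ ef : ℝ → (Fin 6 → ℝ))
    (hex : ∀ t, HasDerivAt ex (ex' t) t)
    (hex' : ∀ t, HasDerivAt ex' (ex'' t) t)
    (hef : Continuous ef)
    (hψ : ∀ t, HasDerivAt ψ
      (Λ *ᵥ ψ t + Γp *ᵥ ex t + Γv *ᵥ ex' t + Γf *ᵥ ef t) t)
    (himp : ∀ t, Md *ᵥ ex'' t + Dd *ᵥ ex' t + Kd *ᵥ ex t = -ef t) :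
    ∀ t, HasDerivAt (fun s => ex' s + ϑe *ᵥ ex s + ϑψ *ᵥ ψ s)
      ((ϑψ * Λ * ϑψ⁻¹) *ᵥ (ex' t + ϑe *ᵥ ex t + ϑψ *ᵥ ψ t)) t := by
  have hdψ : IsUnit ϑψ.det := (Matrix.isUnit_iff_isUnit_det _).mp hϑψ
  have hdM : IsUnit Md.det := (Matrix.isUnit_iff_isUnit_det _).mp hMd
  have hc1 : ∀ v : Fin 6 → ℝ, ϑψ *ᵥ (ϑψ⁻¹ *ᵥ v) = v := by
    intro v
    rw [Matrix.mulVec_mulVec, Matrix.mul_nonsing_inv _ hdψ, Matrix.one_mulVec]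
  have hc2 : ∀ v : Fin 6 → ℝ, ϑψ⁻¹ *ᵥ (ϑψ *ᵥ v) = v := by
    intro v
    rw [Matrix.mulVec_mulVec, Matrix.nonsing_inv_mul _ hdψ, Matrix.one_mulVec]
  have hcM : ∀ v : Fin 6 → ℝ, Md⁻¹ *ᵥ (Md *ᵥ v) = v := by
    intro v
    rw [Matrix.mulVec_mulVec, Matrix.nonsing_inv_mul _ hdM, Matrix.one_mulVec]
  intro t
  have dψ : HasDerivAt (fun s => ϑψ *ᵥ ψ s)
      (ϑψ *ᵥ (Λ *ᵥ ψ t + Γp *ᵥ ex t + Γv *ᵥ ex' t + Γf *ᵥ ef t)) t := by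
    have := ((Matrix.mulVecLin ϑψ).toContinuousLinearMap).hasFDerivAt.comp_hasDerivAt t (hψ t)
    simpa [Function.comp_def, Matrix.mulVec_add] using this
  have de : HasDerivAt (fun s => ϑe *ᵥ ex s) (ϑe *ᵥ ex' t) t := by
    have := ((Matrix.mulVecLin ϑe).toContinuousLinearMap).hasFDerivAt.comp_hasDerivAt t (hex t)
    simpa [Function.comp_def] using this
  have hsum := ((hex' t).add de).add dψ
  convert hsum using 1
  case e'_4 => rfl
  case e'_5 => rfl
  case e'_6 => rfl
  case e'_8 => rfl
  -- algebraic identity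
  have hE : ex'' t = Md⁻¹ *ᵥ (-(ef t)) - Md⁻¹ *ᵥ (Dd *ᵥ ex' t) - Md⁻¹ *ᵥ (Kd *ᵥ ex t) := by
    have h := congrArg (fun v => Md⁻¹ *ᵥ v) (himp t)
    simp only [Matrix.mulVec_add, hcM] at h
    rw [← h]
    abel
  rw [hE, hΓp, hΓv, hΓf]
  simp only [Matrix.mulVec_add, Matrix.mulVec_sub, Matrix.add_mulVec, Matrix.sub_mulVec,
    ← Matrix.mulVec_mulVec, hc1, hc2, Matrix.mulVec_neg]
  abel
end
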